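/- For quasi-normal E ≤ G and g, h ∈ G, writing ᵍE = gEg⁻¹, one has [E : E ∩ ᵍE] / [ᵍE : E ∩ ᵍE] = [E : E ∩ ᵍE ∩ ᵍʰE] / [ᵍE : E ∩ ᵍE ∩ ᵍʰE], i.e., the modular ratio of g can be computed after intersecting with the additional conjugate ghE(gh)⁻¹. -/

import Mathlib

/-- The conjugate subgroup `gEg⁻¹`. -/
def conjSubgroup {G : Type*} [Group G] (g : G) (E : Subgroup G) : Subgroup G :=
  E.map (MulAut.conj g).toMonoidHom

/-- For a quasi-normal subgroup `E ≤ G` and `g, h ∈ G`, writing `ᵍE = gEg⁻¹`, one has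
`[E : E ∩ ᵍE] / [ᵍE : E ∩ ᵍE] = [E : E ∩ ᵍE ∩ ᵍʰE] / [ᵍE : E ∩ ᵍE ∩ ᵍʰE]`:
the modular ratio of `g` can be computed after intersecting with the additional conjugate
`(gh)E(gh)⁻¹`.  Here `[K : H ∩ K]` is `Subgroup.relindex H K`. -/
theorem modular_ratio_intersect {G : Type*} [Group G] (E : Subgroup G)
    (hqn : ∀ k : G, (conjSubgroup k E).relIndex E ≠ 0 ∧ E.relIndex (conjSubgroup k E) ≠ 0)
    (g h : G) :
    ((conjSubgroup g E).relIndex E : ℚ) / (E.relIndex (conjSubgroup g E) : ℚ) =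
      ((conjSubgroup g E ⊓ conjSubgroup (g * h) E).relIndex E : ℚ) /
        ((E ⊓ conjSubgroup (g * h) E).relIndex (conjSubgroup g E) : ℚ) := by
  set A := conjSubgroup g E with hA
  set B := conjSubgroup (g * h) E with hB
  have hb : E.relIndex A ≠ 0 := (hqn g).2
  have hBE : B.relIndex E ≠ 0 := (hqn (g * h)).1
  have hc : B.relIndex (E ⊓ A) ≠ 0 := fun h0 =>
    hBE (Subgroup.relIndex_eq_zero_of_le_right inf_le_left h0)
  -- common factor
  set c := (E ⊓ A ⊓ B).relIndex (E ⊓ A) with hcdef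
  have hc' : c ≠ 0 := by
    have : E ⊓ A ⊓ B = B ⊓ (E ⊓ A) := by rw [inf_comm]
    rw [hcdef, this, Subgroup.inf_relIndex_right]
    exact hc
  have hnum : (A ⊓ B).relIndex E = c * (A.relIndex E) := by
    have h1 : (A ⊓ B).relIndex E = (E ⊓ A ⊓ B).relIndex E := by
      rw [← Subgroup.inf_relIndex_right (A ⊓ B) E]
      congr 1
      rw [inf_comm (A ⊓ B) E, inf_assoc]
    have h2 : (E ⊓ A).relIndex E = A.relIndex E := by
      rw [inf_comm, Subgroup.inf_relIndex_right]
    rw [h1, ← Subgroup.relIndex_mul_relIndex (E ⊓ A ⊓ B) (E ⊓ A) E inf_le_left inf_le_left, h2]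
  have hden : (E ⊓ B).relIndex A = c * (E.relIndex A) := by
    have h1 : (E ⊓ B).relIndex A = (E ⊓ A ⊓ B).relIndex A := by
      rw [← Subgroup.inf_relIndex_right (E ⊓ B) A]
      congr 1
      rw [inf_assoc, inf_comm B A, ← inf_assoc]
    have h2 : (E ⊓ A).relIndex A = E.relIndex A := Subgroup.inf_relIndex_right E A
    rw [h1, ← Subgroup.relIndex_mul_relIndex (E ⊓ A ⊓ B) (E ⊓ A) A
      inf_le_left inf_le_right, h2]
  rw [hnum, hden]
  push_cast
  rw [mul_div_mul_left]
  exact_mod_cast hc'
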